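/- Every point on the geodesic shortest path from a site s to a point x in s's Voronoi cell also lies in s's Voronoi cell (geodesic star-shapedness of cells): if d(x,s) ≤ d(x,t) for all t ∈ S and y lies on the shortest path from s to x, then d(y,s) ≤ d(y,t) for all t ∈ S. -/
import Mathlib


open Set ENNReal

noncomputable section

abbrev E2 : Type := EuclideanSpace ℝ (Fin 2)

/-- The paths from `p` to `q` staying inside `P`, parameterized on `[0,1]`. -/
def pathsIn (P : Set E2) (p q : E2) : Set (ℝ → E2) :=
  {γ | ContinuousOn γ (Icc 0 1) ∧ MapsTo γ (Icc 0 1) P ∧ γ 0 = p ∧ γ 1 = q}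

/-- The geodesic distance in `P`: the infimum of the lengths (total variations)
of paths from `p` to `q` lying entirely in `P`. -/
def geoDist (P : Set E2) (p q : E2) : ℝ≥0∞ :=
  ⨅ γ ∈ pathsIn P p q, eVariationOn γ (Icc 0 1)

/-!
STATEMENT 5: Geodesic star-shapedness of Voronoi cells: if x is in the cell of s
(d(x,s) ≤ d(x,t) for all t ∈ S) and y lies on the shortest path from s to x
(expressed by d(s,y) + d(y,x) = d(s,x), the context property of shortest paths),
then d(y,s) ≤ d(y,t) for all t ∈ S.
-/

lemma geoDist_symm_le (P : Set E2) (p q : E2) : geoDist P q p ≤ geoDist P p q := by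
  refine le_iInf₂ fun γ hγ => ?_
  obtain ⟨hc, hm, h0, h1⟩ := hγ
  have hanti : AntitoneOn (fun u : ℝ => 1 - u) (Icc 0 1) := fun a _ b _ hab => by simp only []; linarith
  have himg : (fun u : ℝ => 1 - u) '' (Icc 0 1) = Icc 0 1 := by
    ext u; constructor
    · rintro ⟨v, ⟨h0v, hv1⟩, rfl⟩; exact ⟨by simp only []; linarith, by simp only []; linarith⟩
    · rintro ⟨h0u, hu1⟩; exact ⟨1 - u, ⟨by linarith, by linarith⟩, by ring⟩
  have hmem : (γ ∘ fun u : ℝ => 1 - u) ∈ pathsIn P q p := by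
    refine ⟨hc.comp (by fun_prop) ?_, ?_, by simp [h1], by simp [h0]⟩
    · intro u hu; rw [← himg]; exact mem_image_of_mem _ hu
    · intro u hu; exact hm (by rw [← himg]; exact mem_image_of_mem _ hu)
  calc geoDist P q p ≤ eVariationOn (γ ∘ fun u : ℝ => 1 - u) (Icc 0 1) := iInf₂_le _ hmem
    _ = eVariationOn γ (Icc 0 1) := by
        rw [eVariationOn.comp_eq_of_antitoneOn γ _ hanti, himg]

lemma geoDist_symm (P : Set E2) (p q : E2) : geoDist P p q = geoDist P q p :=
  le_antisymm (geoDist_symm_le P q p) (geoDist_symm_le P p q)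

lemma concat_bound (P : Set E2) (a b c : E2) (γ δ : ℝ → E2)
    (hγ : γ ∈ pathsIn P a b) (hδ : δ ∈ pathsIn P b c) :
    geoDist P a c ≤ eVariationOn γ (Icc 0 1) + eVariationOn δ (Icc 0 1) := by
  obtain ⟨hγc, hγm, hγ0, hγ1⟩ := hγ
  obtain ⟨hδc, hδm, hδ0, hδ1⟩ := hδ
  set η : ℝ → E2 := fun u => if u ≤ (1/2:ℝ) then γ (2*u) else δ (2*u - 1) with hη
  have hsetp : {u : ℝ | u ≤ (1/2:ℝ)} = Iic (1/2) := rfl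
  have hsetn : {u : ℝ | ¬ u ≤ (1/2:ℝ)} = Ioi (1/2) := by ext u; simp [not_le]
  have hcont : ContinuousOn η (Icc 0 1) := by
    rw [hη]
    apply ContinuousOn.if
    · intro u hu
      rw [hsetp, frontier_Iic] at hu
      have : u = 1/2 := hu.2
      subst this
      norm_num [hγ1, hδ0]
    · rw [hsetp, closure_Iic]
      apply hγc.comp (by fun_prop)
      rintro u ⟨⟨h0, h1⟩, h2⟩
      simp only [mem_Icc]
      constructor <;> linarith [mem_Iic.mp h2]
    · rw [hsetn, closure_Ioi]
      apply hδc.comp (by fun_prop)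
      rintro u ⟨⟨h0, h1⟩, h2⟩
      simp only [mem_Icc]
      constructor <;> linarith [mem_Ici.mp h2]
  have hmaps : MapsTo η (Icc 0 1) P := by
    rintro u ⟨h0, h1⟩
    by_cases h : u ≤ 1/2
    · rw [hη]; simp only [if_pos h]; exact hγm ⟨by linarith, by linarith⟩
    · rw [hη]; simp only [if_neg h]
      push_neg at h
      exact hδm ⟨by linarith, by linarith⟩
  have hmem : η ∈ pathsIn P a c := by
    refine ⟨hcont, hmaps, ?_, ?_⟩
    · simp [hη, hγ0]
    · norm_num [hη, hδ1]
  have hsplit : eVariationOn η (Icc 0 1)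
      = eVariationOn η (Icc 0 (1/2)) + eVariationOn η (Icc (1/2) 1) := by
    have := eVariationOn.Icc_add_Icc η (s := Icc (0:ℝ) 1) (a := 0) (b := 1/2) (c := 1)
      (by norm_num) (by norm_num) (by norm_num)
    rw [Icc_inter_Icc, Icc_inter_Icc, Icc_inter_Icc] at this
    norm_num at this
    rw [← this]
  have h1 : eVariationOn η (Icc 0 (1/2)) = eVariationOn γ (Icc 0 1) := by
    have heq : EqOn η (γ ∘ fun u : ℝ => 2*u) (Icc 0 (1/2)) := by
      rintro u ⟨h0, h2⟩
      simp only [hη, Function.comp_apply, if_pos h2]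
    rw [eVariationOn.eq_of_eqOn heq,
      eVariationOn.comp_eq_of_monotoneOn γ _ (fun a _ b _ hab => by show 2*a ≤ 2*b; linarith)]
    congr 1
    ext v; constructor
    · rintro ⟨w, ⟨hw0, hw2⟩, rfl⟩; simp only [mem_Icc]; constructor <;> linarith
    · rintro ⟨h0, h1⟩; exact ⟨v/2, ⟨by linarith, by linarith⟩, by ring⟩
  have h2 : eVariationOn η (Icc (1/2) 1) = eVariationOn δ (Icc 0 1) := by
    have heq : EqOn η (δ ∘ fun u : ℝ => 2*u - 1) (Icc (1/2) 1) := by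
      rintro u ⟨h0, h2⟩
      by_cases h : u ≤ 1/2
      · have : u = 1/2 := le_antisymm h h0
        subst this
        simp only [hη, Function.comp_apply]
        norm_num [hγ1, hδ0]
      · simp only [hη, Function.comp_apply, if_neg h]
    rw [eVariationOn.eq_of_eqOn heq,
      eVariationOn.comp_eq_of_monotoneOn δ _ (fun a _ b _ hab => by show 2*a-1 ≤ 2*b-1; linarith)]
    congr 1
    ext v; constructor
    · rintro ⟨w, ⟨hw0, hw2⟩, rfl⟩; simp only [mem_Icc]; constructor <;> linarith
    · rintro ⟨h0, h1⟩; exact ⟨(v+1)/2, ⟨by linarith, by linarith⟩, by ring⟩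
  calc geoDist P a c ≤ eVariationOn η (Icc 0 1) := iInf₂_le _ hmem
    _ = _ := by rw [hsplit, h1, h2]

lemma geoDist_triangle (P : Set E2) (a b c : E2) :
    geoDist P a c ≤ geoDist P a b + geoDist P b c := by
  conv_rhs => rw [geoDist, geoDist]
  simp only [ENNReal.iInf_add, ENNReal.add_iInf]
  refine le_iInf fun γ => le_iInf fun hγ => le_iInf fun δ => le_iInf fun hδ => ?_
  first
  | exact concat_bound P a b c γ δ hγ hδ
  | exact concat_bound P a b c δ γ hδ hγ

theorem point_on_shortest_path_in_cell (P : Set E2) (S : Finset E2) (hS : ↑S ⊆ P)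
    (s x y : E2) (hs : s ∈ P) (hx : x ∈ P) (hy : y ∈ P)
    (hfin : geoDist P s x ≠ ⊤)
    (hon : geoDist P s y + geoDist P y x = geoDist P s x)
    (hcell : ∀ t ∈ S, geoDist P x s ≤ geoDist P x t) :
    ∀ t ∈ S, geoDist P y s ≤ geoDist P y t := by
  intro t ht
  have hyx : geoDist P y x ≠ ⊤ := by
    intro h; rw [← hon, h, add_top] at hfin; exact hfin rfl
  have key : geoDist P y x + geoDist P s y ≤ geoDist P y x + geoDist P y t := by
    rw [add_comm (geoDist P y x), hon]
    calc geoDist P s x = geoDist P x s := geoDist_symm P s x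
      _ ≤ geoDist P x t := hcell t ht
      _ ≤ geoDist P x y + geoDist P y t := geoDist_triangle P x y t
      _ = geoDist P y x + geoDist P y t := by rw [geoDist_symm P x y]
  rw [geoDist_symm P y s]
  exact (ENNReal.add_le_add_iff_left hyx).mp key


end
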